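/- Let σ = (1,2,3,4,5,6,7,8,9) and τ = (1,3,4,7,8,2,5,6,9) be cyclic permutations of {1,...,9}. Then the subgroup of the symmetric group on 9 elements generated by σ and τ equals the alternating group Alt 9. -/

import Mathlib

open Equiv Equiv.Perm Subgroup
open Fin.NatCast Fin.CommRing

private def σc : Perm (Fin 9) := ⟨![1,2,3,4,5,6,7,8,0], ![8,0,1,2,3,4,5,6,7], by decide, by decide⟩
private def τc : Perm (Fin 9) := ⟨![2,4,3,6,5,8,7,1,0], ![8,7,0,2,1,4,3,6,5], by decide, by decide⟩

private def wE (σ τ : Perm (Fin 9)) : List (Fin 4) → Perm (Fin 9)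
  | [] => 1
  | c :: l => (if c = 0 then σ else if c = 1 then σ⁻¹ else if c = 2 then τ else τ⁻¹) * wE σ τ l

private lemma wE_mem (σ τ : Perm (Fin 9)) (l : List (Fin 4)) :
    wE σ τ l ∈ Subgroup.closure {σ, τ} := by
  induction l with
  | nil => exact one_mem _
  | cons c l ih =>
    have hs : σ ∈ Subgroup.closure {σ, τ} := subset_closure (Set.mem_insert _ _)
    have ht : τ ∈ Subgroup.closure {σ, τ} :=
      subset_closure (Set.mem_insert_iff.2 (Or.inr rfl))
    have hmul : wE σ τ (c :: l)
        = (if c = 0 then σ else if c = 1 then σ⁻¹ else if c = 2 then τ else τ⁻¹) * wE σ τ l := rfl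
    rw [hmul]
    refine mul_mem ?_ ih
    split_ifs
    · exact hs
    · exact inv_mem hs
    · exact ht
    · exact inv_mem ht

private def W : Fin 9 → Fin 9 → List (Fin 4)
  | 1, 2 => [2,1,1,3,0,0]
  | 1, 3 => [2,1,1,3,0,2,2,1,1,1]
  | 1, 4 => [2,0,3,3,1,2]
  | 1, 5 => [2,0,3,3,3,3,0,3,3,3]
  | 1, 6 => [0,3,0,3,3,0,2,0]
  | 1, 7 => [2,0,0,0,0,2,2,0,3]
  | 1, 8 => [0,3,3,0,0,0]
  | 2, 1 => [3,0,0,2,1,1]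
  | 2, 3 => [3,0,0,2,0,3,3,0]
  | 2, 4 => [2,0,3,3,0,2,1,1]
  | 2, 5 => [3,0,2,1,3,1,3,0,3,0]
  | 2, 6 => [0,3,0,3,1,3,1,2,0,3]
  | 2, 7 => [3,0,2,1,1,3,0,2]
  | 2, 8 => [0,3,3,0,2,2,1,1]
  | 3, 1 => [0,2,1,1,3,1,2,2,1,1]
  | 3, 2 => [1,2,2,1,3,3,0,0]
  | 3, 4 => [1,2,2,2,1,2,2,1,2,0]
  | 3, 5 => [2,2,2,0,2,1,3,3,3,3,1]
  | 3, 6 => [1,2,2,1,2,2,1,2,2,0]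
  | 3, 7 => [2,2,2,0,3,1,3,3,1,3,0]
  | 3, 8 => [1,2,0,3,3,1,2,0]
  | 4, 1 => [3,0,2,2,1,3]
  | 4, 2 => [2,1,3,0,0,2,1,3]
  | 4, 3 => [3,0,2,2,0,3,0,3,3,0]
  | 4, 5 => [1,3,0,3,3,3,3,0,3,0]
  | 4, 6 => [0,2,2,2,0,3,3,1,3,1]
  | 4, 7 => [0,3,1,3,3,0,2,2,2,1]
  | 4, 8 => [0,3,1,3,1,2,0,3,0,3]
  | 5, 1 => [2,2,2,1,2,2,2,2,1,3]
  | 5, 2 => [0,3,0,2,0,2,0,3,1,2]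
  | 5, 3 => [3,3,1,2,0,2,2,0,2,1,3]
  | 5, 4 => [0,3,0,2,2,2,2,1,2,0]
  | 5, 6 => [3,0,3,3,0,3,0,2,2,0]
  | 5, 7 => [0,0,0,2,2,0,3,3,0,2,2]
  | 5, 8 => [3,0,3,3,0,2,0,0]
  | 6, 1 => [1,3,1,2,2,0,3,0]
  | 6, 2 => [2,1,3,0,2,0,2,0,3,0]
  | 6, 3 => [1,3,3,0,3,3,0,3,3,0]
  | 6, 4 => [2,0,3,1,2,0,2,0,3,0]
  | 6, 5 => [1,3,3,3,0,3,3,0,3,0]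
  | 6, 7 => [1,3,3,0,2,2]
  | 6, 8 => [0,3,1,3,0,0,2,0,3,0]
  | 7, 1 => [2,1,3,3,1,1,1,1,3]
  | 7, 2 => [3,1,2,2,1,3,0,0]
  | 7, 3 => [0,3,3,3,1,3,0,2,2,2,2]
  | 7, 4 => [3,0,3,0,2,0,2,1,2,0]
  | 7, 5 => [2,0,3,3,0,2,2,0,0,0,0]
  | 7, 6 => [3,3,1,2,2,0]
  | 7, 8 => [3,3,0,0,0,0]
  | 8, 1 => [1,3,0,0,2,1]
  | 8, 2 => [2,1,1,3,1,2,2,1]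
  | 8, 3 => [1,3,0,2,2,1,3,0]
  | 8, 4 => [2,0,3,0,3,0,2,0,2,1]
  | 8, 5 => [1,1,3,1,2,2,1,2]
  | 8, 6 => [0,3,0,3,3,0,0,0,2,1]
  | 8, 7 => [1,1,3,0,0,2]
  | _, _ => []

set_option maxRecDepth 40000 in
private lemma key : ∀ b c : Fin 9, b ≠ 0 → c ≠ 0 → b ≠ c →
    Equiv.swap 0 b * Equiv.swap b c = wE σc τc (W b c) := by decide

private lemma sigma_pow (n : ℕ) (x : Fin 9) : (σc ^ n) x = x + (n : Fin 9) := by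
  induction n with
  | zero => simp
  | succ n ih =>
    have h1 : ∀ y : Fin 9, σc y = y + 1 := by decide
    rw [pow_succ', Perm.mul_apply, ih, h1]
    push_cast
    ring

/-- Any three-cycle decomposes as a product of two swaps with distinct points. -/
private lemma decomp {g : Perm (Fin 9)} (hg : IsThreeCycle g) :
    ∃ a b c : Fin 9, a ≠ b ∧ b ≠ c ∧ a ≠ c ∧ g = Equiv.swap a b * Equiv.swap b c := by
  obtain ⟨a, ha, -⟩ := hg.isCycle
  have h3 : g ^ 3 = 1 := by rw [← hg.orderOf]; exact pow_orderOf_eq_one g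
  have hgc : g (g (g a)) = a := by
    have h := congrArg (fun p : Perm (Fin 9) => p a) h3
    simpa [pow_succ, Perm.mul_apply] using h
  have hab : a ≠ g a := Ne.symm ha
  have hbc : g a ≠ g (g a) := fun h => ha ((g.injective h).symm)
  have hac : a ≠ g (g a) := fun h => ha ((congrArg g h).trans hgc)
  refine ⟨a, g a, g (g a), hab, hbc, hac, ?_⟩
  have hsub : ({a, g a, g (g a)} : Finset (Fin 9)) ⊆ g.support := by
    intro x hx
    simp only [Finset.mem_insert, Finset.mem_singleton] at hx
    rcases hx with rfl | rfl | rfl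
    · exact Perm.mem_support.2 ha
    · exact Perm.mem_support.2 (Ne.symm hbc)
    · exact Perm.mem_support.2 (by rw [hgc]; exact hac)
  have hcard : ({a, g a, g (g a)} : Finset (Fin 9)).card = 3 := by
    rw [Finset.card_insert_of_notMem (by simp [hab, hac]),
      Finset.card_insert_of_notMem (by simp [hbc]), Finset.card_singleton]
  have hsupp : ({a, g a, g (g a)} : Finset (Fin 9)) = g.support :=
    Finset.eq_of_subset_of_card_le hsub (by rw [hg.card_support, hcard])
  ext x
  rcases eq_or_ne x a with rfl | hxa
  · rw [Perm.mul_apply, Equiv.swap_apply_of_ne_of_ne hab hac, Equiv.swap_apply_left]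
  rcases eq_or_ne x (g a) with rfl | hxb
  · rw [Perm.mul_apply, Equiv.swap_apply_left,
      Equiv.swap_apply_of_ne_of_ne (Ne.symm hac) (Ne.symm hbc)]
  rcases eq_or_ne x (g (g a)) with rfl | hxc
  · rw [Perm.mul_apply, Equiv.swap_apply_right, Equiv.swap_apply_right, hgc]
  have hx : x ∉ g.support := by rw [← hsupp]; simp [hxa, hxb, hxc]
  rw [Perm.notMem_support.1 hx, Perm.mul_apply,
    Equiv.swap_apply_of_ne_of_ne hxb hxc, Equiv.swap_apply_of_ne_of_ne hxa hxb]

/-- For `σ = (1,…,9)` and `τ = (1,3,4,7,8,2,5,6,9)` (zero-based on `Fin 9`),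
the subgroup generated by `σ` and `τ` is the alternating group `Alt 9`. -/
theorem stmt_13 (σ τ : Equiv.Perm (Fin 9))
    (hσ : σ = ([0, 1, 2, 3, 4, 5, 6, 7, 8] : List (Fin 9)).formPerm)
    (hτ : τ = ([0, 2, 3, 6, 7, 1, 4, 5, 8] : List (Fin 9)).formPerm) :
    Subgroup.closure {σ, τ} = alternatingGroup (Fin 9) := by
  have hσ' : σ = σc := by rw [hσ]; decide
  have hτ' : τ = τc := by rw [hτ]; decide
  subst hσ' hτ'
  apply le_antisymm
  · rw [Subgroup.closure_le]
    rintro x (rfl | rfl)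
    · exact Perm.mem_alternatingGroup.2 (by decide)
    · exact Perm.mem_alternatingGroup.2 (by decide)
  · rw [← closure_three_cycles_eq_alternating, Subgroup.closure_le]
    intro g hg
    obtain ⟨a, b, c, hab, hbc, hac, rfl⟩ := decomp hg
    have hpow : σc ^ (a : ℕ) ∈ Subgroup.closure ({σc, τc} : Set (Perm (Fin 9))) :=
      pow_mem (subset_closure (Set.mem_insert _ _)) _
    have h0 : (σc ^ (a : ℕ)) 0 = a := by
      rw [sigma_pow]; simp
    have h1 : (σc ^ (a : ℕ)) (b - a) = b := by
      rw [sigma_pow, Fin.cast_val_eq_self, sub_add_cancel]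
    have h2 : (σc ^ (a : ℕ)) (c - a) = c := by
      rw [sigma_pow, Fin.cast_val_eq_self, sub_add_cancel]
    have e1 : Equiv.swap a b = σc ^ (a : ℕ) * Equiv.swap 0 (b - a) * (σc ^ (a : ℕ))⁻¹ := by
      rw [← Equiv.swap_apply_apply, h0, h1]
    have e2 : Equiv.swap b c = σc ^ (a : ℕ) * Equiv.swap (b - a) (c - a) * (σc ^ (a : ℕ))⁻¹ := by
      rw [← Equiv.swap_apply_apply, h1, h2]
    have hb0 : b - a ≠ 0 := sub_ne_zero.2 (Ne.symm hab)
    have hc0 : c - a ≠ 0 := sub_ne_zero.2 (Ne.symm hac)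
    have hbc' : b - a ≠ c - a := fun h => hbc (sub_left_inj.1 h)
    have hword := key (b - a) (c - a) hb0 hc0 hbc'
    show Equiv.swap a b * Equiv.swap b c ∈ Subgroup.closure ({σc, τc} : Set (Perm (Fin 9)))
    rw [e1, e2]
    have : σc ^ (a : ℕ) * Equiv.swap 0 (b - a) * (σc ^ (a : ℕ))⁻¹ *
        (σc ^ (a : ℕ) * Equiv.swap (b - a) (c - a) * (σc ^ (a : ℕ))⁻¹)
        = σc ^ (a : ℕ) * (Equiv.swap 0 (b - a) * Equiv.swap (b - a) (c - a)) * (σc ^ (a : ℕ))⁻¹ := by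
      group
    rw [this, hword]
    exact mul_mem (mul_mem hpow (wE_mem _ _ _)) (inv_mem hpow)
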